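/- In infinite Wordle with the complete dictionary of all words ℕ → Σ over a countably infinite alphabet Σ, the codebreaker has no strategy guaranteeing a win at a finite stage: for every strategy there exists a codeword w and a play consistent with the Wordle feedback for w such that no finite-stage guess equals w. -/

import Mathlib

/-- Green feedback: the set of positions where the guess `s` is correct for
the codeword `w`. -/
def greenSet {α : Type*} (s w : ℕ → α) : Set ℕ := {i : ℕ | s i = w i}

/-- Yellow feedback: a misplaced letter at position `i` is marked yellow iff
the number of earlier misplaced occurrences of that letter in the guess is
smaller than the number of occurrences of that letter in the codeword at
non-green positions (so the first `k` misplaced occurrences are yellow when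
`k` additional such letters appear elsewhere in the codeword). -/
def yellowSet {α : Type*} (s w : ℕ → α) : Set ℕ :=
  {i : ℕ | s i ≠ w i ∧
    Cardinal.mk {j : ℕ | j < i ∧ s j = s i ∧ s j ≠ w j} <
      Cardinal.mk {j : ℕ | w j = s i ∧ s j ≠ w j}}

namespace InfWordle

variable {α : Type*}

def keys (P : List (ℕ × α)) : Set ℕ := {m | ∃ a, (m, a) ∈ P}
def vals (P : List (ℕ × α)) : Set α := {a | ∃ m, (m, a) ∈ P}

lemma keys_finite (P : List (ℕ × α)) : (keys P).Finite := by
  have h : keys P ⊆ Prod.fst '' {x | x ∈ P} := by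
    rintro m ⟨a, ha⟩; exact ⟨(m, a), ha, rfl⟩
  exact ((P.finite_toSet).image _).subset h

lemma vals_finite (P : List (ℕ × α)) : (vals P).Finite := by
  have h : vals P ⊆ Prod.snd '' {x | x ∈ P} := by
    rintro a ⟨m, hm⟩; exact ⟨(m, a), hm, rfl⟩
  exact ((P.finite_toSet).image _).subset h

def Inj (P : List (ℕ × α)) : Prop :=
  ∀ m a m' a', (m, a) ∈ P → (m', a') ∈ P → (m = m' ↔ a = a')

def Tset (P : List (ℕ × α)) (L : List (ℕ → α)) (c : α) : Set ℕ :=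
  {m | m ∉ keys P ∧ ∀ g ∈ L, g m ≠ c}

lemma thr_finite (P : List (ℕ × α)) (L : List (ℕ → α)) (g : ℕ → α) :
    {c : α | c ∉ vals P ∧ (Tset P L c ∩ {m | g m ≠ c}).Finite}.Finite := by
  classical
  by_contra hinf
  rw [← Set.not_infinite, not_not] at hinf
  obtain ⟨F, hF, hcard⟩ := hinf.exists_subset_card_eq (L.length + 2)
  have hEfin : (keys P ∪ ⋃ c ∈ F, (Tset P L c ∩ {m | g m ≠ c})).Finite := by
    refine (keys_finite P).union (Set.Finite.biUnion F.finite_toSet ?_)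
    intro c hc
    exact (hF hc).2
  obtain ⟨m, hm⟩ := hEfin.infinite_compl.nonempty
  simp only [Set.mem_compl_iff, Set.mem_union, Set.mem_iUnion, not_or, not_exists] at hm
  obtain ⟨hmk, hmU⟩ := hm
  have hsub : F ⊆ ((g :: L).map (fun g' => g' m)).toFinset := by
    intro c hc
    rw [List.mem_toFinset, List.mem_map]
    by_contra hnc
    push_neg at hnc
    have hgL : ∀ g' ∈ L, g' m ≠ c := fun g' hg' => hnc g' (List.mem_cons_of_mem _ hg')
    have hgm : g m ≠ c := hnc g List.mem_cons_self
    exact hmU c hc ⟨⟨hmk, hgL⟩, hgm⟩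
  have h1 := Finset.card_le_card hsub
  have h2 := List.toFinset_card_le ((g :: L).map (fun g2 => g2 m))
  rw [hcard] at h1
  simp only [List.length_map, List.length_cons] at h2
  have h3 := h1.trans h2
  exact Nat.not_succ_le_self (L.length + 1) h3

/-- Place a finite set `D` of fresh letters at safe fresh positions. -/
lemma place (P : List (ℕ × α)) (L : List (ℕ → α)) (hinj : Inj P)
    (htinf : ∀ c, c ∉ vals P → (Tset P L c).Infinite) (D : Finset α) :
    (∀ c ∈ D, c ∉ vals P) →
    ∃ Q : List (ℕ × α), (∀ x ∈ P, x ∈ Q) ∧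
      (∀ x ∈ Q, x ∉ P → x.1 ∈ Tset P L x.2) ∧
      Inj Q ∧ (∀ c ∈ D, c ∈ vals Q) ∧ (∀ c ∈ vals Q, c ∈ vals P ∨ c ∈ D) := by
  classical
  induction D using Finset.induction_on with
  | empty =>
      intro _
      exact ⟨P, fun x hx => hx, fun x hx hnx => absurd hx hnx, hinj,
        fun c hc => absurd hc (Finset.notMem_empty c), fun c hc => Or.inl hc⟩
  | @insert c s hcs ih =>
      intro hD
      obtain ⟨Q, h1, h2, h3, h4, h5⟩ := ih (fun c' hc' => hD c' (Finset.mem_insert_of_mem hc'))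
      have hcP : c ∉ vals P := hD c (Finset.mem_insert_self c s)
      have hT : (Tset P L c).Infinite := htinf c hcP
      obtain ⟨m, hmT, hmQ⟩ := (hT.diff (keys_finite Q)).nonempty
      have hcQ : c ∉ vals Q := by
        intro hc
        rcases h5 c hc with h | h
        · exact hcP h
        · exact hcs h
      refine ⟨(m, c) :: Q, ?_, ?_, ?_, ?_, ?_⟩
      · intro x hx; exact List.mem_cons_of_mem _ (h1 x hx)
      · intro x hx hnx
        rcases List.mem_cons.mp hx with h | h
        · subst h; exact hmT
        · exact h2 x h hnx
      · intro m1 a1 m2 a2 hx1 hx2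
        rcases List.mem_cons.mp hx1 with h | h <;> rcases List.mem_cons.mp hx2 with h' | h'
        · rw [Prod.mk.injEq] at h h'
          obtain ⟨rfl, rfl⟩ := h; obtain ⟨e1, e2⟩ := h'
          constructor <;> intro <;> [exact e2.symm; exact e1.symm]
        · rw [Prod.mk.injEq] at h
          obtain ⟨rfl, rfl⟩ := h
          constructor
          · intro he; exact absurd ⟨a2, he ▸ h'⟩ hmQ
          · intro he; exact absurd ⟨m2, he ▸ h'⟩ hcQ
        · rw [Prod.mk.injEq] at h'
          obtain ⟨rfl, rfl⟩ := h'
          constructor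
          · intro he; exact absurd ⟨a1, he ▸ h⟩ hmQ
          · intro he; exact absurd ⟨m1, he ▸ h⟩ hcQ
        · exact h3 _ _ _ _ h h'
      · intro c' hc'
        rcases Finset.mem_insert.mp hc' with h | h
        · exact ⟨m, by rw [h]; exact List.mem_cons_self⟩
        · obtain ⟨m', hm'⟩ := h4 c' h
          exact ⟨m', List.mem_cons_of_mem _ hm'⟩
      · rintro c' ⟨m', hm'⟩
        rcases List.mem_cons.mp hm' with h | h
        · rw [Prod.mk.injEq] at h
          exact Or.inr (by rw [h.2]; exact Finset.mem_insert_self c s)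
        · rcases h5 c' ⟨m', h⟩ with h' | h'
          · exact Or.inl h'
          · exact Or.inr (Finset.mem_insert_of_mem h')


/-- Specification of one stage of the adversary's construction. -/
structure Spec (e : ℕ ≃ α) (P : List (ℕ × α)) (L : List (ℕ → α)) (g : ℕ → α)
    (P' : List (ℕ × α)) : Prop where
  sub : ∀ x ∈ P, x ∈ P'
  newok : ∀ x ∈ P', x ∉ P → x.1 ∉ keys P ∧ ∀ g' ∈ L, g' x.1 ≠ x.2
  inj : Inj P'
  tinf : ∀ c, c ∉ vals P' → (Tset P' (L ++ [g]) c).Infinite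
  filled : ∃ a, (L.length, a) ∈ P'
  surj : e L.length ∈ vals P'

lemma ext_exists [Infinite α] (e : ℕ ≃ α) (P : List (ℕ × α)) (L : List (ℕ → α))
    (g : ℕ → α) (hinj : Inj P) (htinf : ∀ c, c ∉ vals P → (Tset P L c).Infinite) :
    ∃ P', Spec e P L g P' := by
  classical
  set n := L.length with hn
  -- letters that must be placed now
  set D : Finset α :=
    ((thr_finite P L g).toFinset ∪ {e n}).filter (fun c => c ∉ vals P) with hD
  have hDP : ∀ c ∈ D, c ∉ vals P := by
    intro c hc
    exact (Finset.mem_filter.mp hc).2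
  obtain ⟨Q, hQ1, hQ2, hQ3, hQ4, hQ5⟩ := place P L hinj htinf D hDP
  -- choose a value for position n if it is not yet filled
  have hPQvals : ∀ c ∈ vals P, c ∈ vals Q := by
    rintro c ⟨m, hm⟩; exact ⟨m, hQ1 _ hm⟩
  have hPQkeys : ∀ m ∈ keys P, m ∈ keys Q := by
    rintro m ⟨a, ha⟩; exact ⟨a, hQ1 _ ha⟩
  have main : ∀ P', (∀ x ∈ Q, x ∈ P') → (∀ x ∈ P', x ∈ Q ∨
        (x.1 = n ∧ x.1 ∉ keys Q ∧ ∀ g' ∈ L, g' x.1 ≠ x.2)) → Inj P' →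
      (∃ a, (n, a) ∈ P') → Spec e P L g P' := by
    intro P' hQP' hP'Q hinj' hfill
    have hvalsP' : ∀ c ∈ vals P, c ∈ vals P' := by
      rintro c ⟨m, hm⟩; exact ⟨m, hQP' _ (hQ1 _ hm)⟩
    refine ⟨fun x hx => hQP' _ (hQ1 _ hx), ?_, hinj', ?_, hfill, ?_⟩
    · -- newok
      intro x hx hnx
      rcases hP'Q x hx with h | h
      · have := hQ2 x h hnx
        exact ⟨this.1, this.2⟩
      · exact ⟨fun hk => h.2.1 (hPQkeys _ hk), h.2.2⟩
    · -- tinf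
      intro c hc
      have hcP : c ∉ vals P := fun h => hc (hvalsP' c h)
      have hcthr : ¬ (Tset P L c ∩ {m | g m ≠ c}).Finite := by
        intro hfin
        have hcD : c ∈ D := by
          rw [hD, Finset.mem_filter]
          refine ⟨Finset.mem_union_left _ ?_, hcP⟩
          rw [Set.Finite.mem_toFinset]
          exact ⟨hcP, hfin⟩
        have : c ∈ vals Q := hQ4 c hcD
        obtain ⟨m, hm⟩ := this
        exact hc ⟨m, hQP' _ hm⟩
      rw [← Set.not_infinite, not_not] at hcthr
      have hsub2 : (Tset P L c ∩ {m | g m ≠ c}) \ keys P' ⊆ Tset P' (L ++ [g]) c := by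
        rintro m ⟨⟨⟨hmk, hmL⟩, hmg⟩, hmk'⟩
        refine ⟨hmk', ?_⟩
        intro g' hg'
        rcases List.mem_append.mp hg' with h | h
        · exact hmL g' h
        · rw [List.mem_singleton.mp h]; exact hmg
      exact ((hcthr.diff (keys_finite P')).mono hsub2)
    · -- surj
      have : e n ∈ vals Q := by
        by_cases h : e n ∈ vals P
        · exact hPQvals _ h
        · refine hQ4 _ ?_
          rw [hD, Finset.mem_filter]
          exact ⟨Finset.mem_union_right _ (Finset.mem_singleton_self _), h⟩
      obtain ⟨m, hm⟩ := this
      exact ⟨m, hQP' _ hm⟩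
  by_cases hnQ : n ∈ keys Q
  · obtain ⟨a, ha⟩ := hnQ
    exact ⟨Q, main Q (fun x hx => hx) (fun x hx => Or.inl hx) hQ3 ⟨a, ha⟩⟩
  · -- choose a fresh letter for position n
    have hfin : (vals Q ∪ {a | ∃ g' ∈ L, g' n = a}).Finite := by
      refine (vals_finite Q).union ?_
      have : {a | ∃ g' ∈ L, g' n = a} ⊆ (fun g' => g' n) '' {g' | g' ∈ L} := by
        rintro a ⟨g', hg', rfl⟩; exact ⟨g', hg', rfl⟩
      exact ((L.finite_toSet).image _).subset this
    obtain ⟨a, ha⟩ := hfin.infinite_compl.nonempty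
    simp only [Set.mem_compl_iff, Set.mem_union, not_or] at ha
    obtain ⟨haQ, haL⟩ := ha
    refine ⟨(n, a) :: Q, main _ (fun x hx => List.mem_cons_of_mem _ hx) ?_ ?_
      ⟨a, List.mem_cons_self⟩⟩
    · intro x hx
      rcases List.mem_cons.mp hx with h | h
      · right
        rw [Prod.mk.injEq] at h
        obtain ⟨h1, h2⟩ := h
        refine ⟨h1, h1 ▸ hnQ, ?_⟩
        intro g' hg' hc
        exact haL ⟨g', hg', by rw [← h1, hc, h2]⟩
      · exact Or.inl h
    · intro m1 a1 m2 a2 hx1 hx2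
      rcases List.mem_cons.mp hx1 with h | h <;> rcases List.mem_cons.mp hx2 with h' | h'
      · rw [Prod.mk.injEq] at h h'
        obtain ⟨rfl, rfl⟩ := h; obtain ⟨e1, e2⟩ := h'
        constructor <;> intro <;> [exact e2.symm; exact e1.symm]
      · rw [Prod.mk.injEq] at h
        obtain ⟨rfl, rfl⟩ := h
        constructor
        · intro he; exact absurd ⟨a2, he ▸ h'⟩ hnQ
        · intro he; exact absurd ⟨m2, he ▸ h'⟩ haQ
      · rw [Prod.mk.injEq] at h'
        obtain ⟨rfl, rfl⟩ := h'
        constructor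
        · intro he; exact absurd ⟨a1, he ▸ h⟩ hnQ
        · intro he; exact absurd ⟨m1, he ▸ h⟩ haQ
      · exact hQ3 _ _ _ _ h h'


/-- The state space of the construction. -/
def StT (α : Type*) :=
  {S : List (ℕ × α) × List (ℕ → α) //
    Inj S.1 ∧ ∀ c, c ∉ vals S.1 → (Tset S.1 S.2 c).Infinite}

noncomputable def step [Infinite α] (e : ℕ ≃ α) (S : StT α) (g : ℕ → α) : StT α :=
  ⟨(Classical.choose (ext_exists e S.1.1 S.1.2 g S.2.1 S.2.2), S.1.2 ++ [g]),
    (Classical.choose_spec (ext_exists e S.1.1 S.1.2 g S.2.1 S.2.2)).inj,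
    (Classical.choose_spec (ext_exists e S.1.1 S.1.2 g S.2.1 S.2.2)).tinf⟩

noncomputable def init : StT α :=
  ⟨(([] : List (ℕ × α)), ([] : List (ℕ → α))), by
    constructor
    · intro m a m' a' h _; exact absurd h List.not_mem_nil
    · intro c _
      have h : Tset ([] : List (ℕ × α)) ([] : List (ℕ → α)) c = Set.univ := by
        ext m
        simp [Tset, keys]
      rw [h]
      exact Set.infinite_univ⟩

noncomputable def mach [Infinite α] (e : ℕ ≃ α) (σ : ℕ → ℕ → α) : ℕ → StT α
  | 0 => init
  | n + 1 => step e (mach e σ n) (σ n)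

variable [Infinite α] (e : ℕ ≃ α) (σ : ℕ → ℕ → α)

lemma mach_spec (n : ℕ) :
    Spec e (mach e σ n).1.1 (mach e σ n).1.2 (σ n) (mach e σ (n + 1)).1.1 := by
  show Spec e _ _ _ (step e (mach e σ n) (σ n)).1.1
  exact Classical.choose_spec
    (ext_exists e (mach e σ n).1.1 (mach e σ n).1.2 (σ n) (mach e σ n).2.1 (mach e σ n).2.2)

lemma mach_L (n : ℕ) : (mach e σ n).1.2 = (List.range n).map σ := by
  induction n with
  | zero => rfl
  | succ n ih =>
      show (step e (mach e σ n) (σ n)).1.2 = _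
      rw [List.range_succ, List.map_append]
      show (mach e σ n).1.2 ++ [σ n] = _
      rw [ih]
      rfl

lemma mach_prefix (σ' : ℕ → ℕ → α) (n : ℕ) (h : ∀ j < n, σ j = σ' j) :
    mach e σ n = mach e σ' n := by
  induction n with
  | zero => rfl
  | succ n ih =>
      have IH := ih (fun j hj => h j (Nat.lt_succ_of_lt hj))
      show step e (mach e σ n) (σ n) = step e (mach e σ' n) (σ' n)
      rw [IH, h n (Nat.lt_succ_self n)]

lemma mach_mono {k n : ℕ} (hkn : k ≤ n) :
    ∀ x ∈ (mach e σ k).1.1, x ∈ (mach e σ n).1.1 := by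
  induction n, hkn using Nat.le_induction with
  | base => exact fun x hx => hx
  | succ n hkn ih =>
      intro x hx
      exact (mach_spec e σ n).sub x (ih x hx)

lemma mach_L_mono {k n : ℕ} (hkn : k ≤ n) :
    ∀ g' ∈ (mach e σ k).1.2, g' ∈ (mach e σ n).1.2 := by
  intro g' hg'
  rw [mach_L] at hg' ⊢
  rw [List.mem_map] at hg' ⊢
  obtain ⟨j, hj, rfl⟩ := hg'
  rw [List.mem_range] at hj
  exact ⟨j, List.mem_range.mpr (lt_of_lt_of_le hj hkn), rfl⟩

lemma mach_inj_global {k n m a m' a'} (h1 : (m, a) ∈ (mach e σ k).1.1)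
    (h2 : (m', a') ∈ (mach e σ n).1.1) : (m = m' ↔ a = a') := by
  have hk : k ≤ max k n := le_max_left _ _
  have hn : n ≤ max k n := le_max_right _ _
  exact (mach e σ (max k n)).2.1 m a m' a'
    (mach_mono e σ hk _ h1) (mach_mono e σ hn _ h2)

lemma W_ex (m : ℕ) : ∃ a, (m, a) ∈ (mach e σ (m + 1)).1.1 := by
  have h := (mach_spec e σ m).filled
  rwa [mach_L, List.length_map, List.length_range] at h

noncomputable def W (m : ℕ) : α := Classical.choose (W_ex e σ m)

lemma W_mem (m : ℕ) : (m, W e σ m) ∈ (mach e σ (m + 1)).1.1 :=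
  Classical.choose_spec (W_ex e σ m)

lemma W_eq {n m a} (h : (m, a) ∈ (mach e σ n).1.1) : W e σ m = a :=
  (mach_inj_global e σ (W_mem e σ m) h).mp rfl

lemma W_inj : Function.Injective (W e σ) := by
  intro m m' h
  exact (mach_inj_global e σ (W_mem e σ m) (W_mem e σ m')).mpr h

lemma W_surj : Function.Surjective (W e σ) := by
  intro c
  have h := (mach_spec e σ (e.symm c)).surj
  rw [mach_L, List.length_map, List.length_range, Equiv.apply_symm_apply] at h
  obtain ⟨m, hm⟩ := h
  exact ⟨m, W_eq e σ hm⟩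

lemma mach_avoid {k : ℕ} : ∀ {n : ℕ}, k ≤ n → ∀ x ∈ (mach e σ n).1.1,
    x.1 ∉ keys (mach e σ k).1.1 → ∀ g' ∈ (mach e σ k).1.2, g' x.1 ≠ x.2 := by
  intro n hkn
  induction n, hkn using Nat.le_induction with
  | base =>
      intro x hx hk
      exact absurd ⟨x.2, hx⟩ hk
  | succ n hkn ih =>
      intro x hx hk g' hg'
      by_cases hxn : x ∈ (mach e σ n).1.1
      · exact ih x hxn hk g' hg'
      · exact ((mach_spec e σ n).newok x hx hxn).2 g' (mach_L_mono e σ hkn g' hg')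

lemma W_avoid {k m : ℕ} (hm : m ∉ keys (mach e σ k).1.1) :
    ∀ g' ∈ (mach e σ k).1.2, g' m ≠ W e σ m := by
  have hx : (m, W e σ m) ∈ (mach e σ (max k (m + 1))).1.1 :=
    mach_mono e σ (le_max_right _ _) _ (W_mem e σ m)
  exact mach_avoid e σ (le_max_left _ _) _ hx hm

lemma W_agrees {n m a} (h : (m, a) ∈ (mach e σ n).1.1) : W e σ m = a :=
  W_eq e σ h


/-- Two codewords that agree with the committed part `P`, avoid the guess `g`
off the committed positions, and are bijections, receive identical feedback
for the guess `g`. -/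
lemma FB (P : List (ℕ × α)) (hP : Inj P) (g u v : ℕ → α)
    (hu1 : ∀ m a, (m, a) ∈ P → u m = a) (hu2 : ∀ m, m ∉ keys P → g m ≠ u m)
    (hu3 : Function.Injective u) (hu4 : Function.Surjective u)
    (hv1 : ∀ m a, (m, a) ∈ P → v m = a) (hv2 : ∀ m, m ∉ keys P → g m ≠ v m)
    (hv3 : Function.Injective v) (hv4 : Function.Surjective v) :
    greenSet g u = greenSet g v ∧ yellowSet g u = yellowSet g v := by
  have heq : ∀ i, (g i = u i) ↔ (g i = v i) := by
    intro i
    by_cases hk : i ∈ keys P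
    · obtain ⟨a, ha⟩ := hk
      rw [hu1 i a ha, hv1 i a ha]
    · exact iff_of_false (fun h => hu2 i hk h) (fun h => hv2 i hk h)
  constructor
  · ext i
    exact heq i
  · ext i
    simp only [yellowSet, Set.mem_setOf_eq]
    have hLHS : {j : ℕ | j < i ∧ g j = g i ∧ g j ≠ u j} =
        {j : ℕ | j < i ∧ g j = g i ∧ g j ≠ v j} := by
      ext j
      simp only [Set.mem_setOf_eq]
      exact and_congr_right fun _ => and_congr_right fun _ => not_congr (heq j)
    have hRHS : Cardinal.mk {j : ℕ | u j = g i ∧ g j ≠ u j} =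
        Cardinal.mk {j : ℕ | v j = g i ∧ g j ≠ v j} := by
      by_cases hc : g i ∈ vals P
      · obtain ⟨m₀, hm₀⟩ := hc
        have hu0 : u m₀ = g i := hu1 m₀ _ hm₀
        have hv0 : v m₀ = g i := hv1 m₀ _ hm₀
        have hset : {j : ℕ | u j = g i ∧ g j ≠ u j} = {j : ℕ | v j = g i ∧ g j ≠ v j} := by
          ext j
          simp only [Set.mem_setOf_eq]
          constructor
          · rintro ⟨h1, h2⟩
            have hj : j = m₀ := hu3 (by rw [h1, hu0])
            subst hj
            rw [hu0] at h2
            exact ⟨hv0, by rw [hv0]; exact h2⟩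
          · rintro ⟨h1, h2⟩
            have hj : j = m₀ := hv3 (by rw [h1, hv0])
            subst hj
            rw [hv0] at h2
            exact ⟨hu0, by rw [hu0]; exact h2⟩
        rw [hset]
      · obtain ⟨mu, hmu⟩ := hu4 (g i)
        obtain ⟨mv, hmv⟩ := hv4 (g i)
        have hmuk : mu ∉ keys P := by
          rintro ⟨a, ha⟩
          have hag : a = g i := by rw [← hu1 mu a ha, hmu]
          exact hc ⟨mu, hag ▸ ha⟩
        have hmvk : mv ∉ keys P := by
          rintro ⟨a, ha⟩
          have hag : a = g i := by rw [← hv1 mv a ha, hmv]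
          exact hc ⟨mv, hag ▸ ha⟩
        have hsu : {j : ℕ | u j = g i ∧ g j ≠ u j} = {mu} := by
          ext j
          simp only [Set.mem_setOf_eq, Set.mem_singleton_iff]
          constructor
          · rintro ⟨h1, _⟩
            exact hu3 (by rw [h1, hmu])
          · intro hj
            rw [hj]
            exact ⟨hmu, hu2 mu hmuk⟩
        have hsv : {j : ℕ | v j = g i ∧ g j ≠ v j} = {mv} := by
          ext j
          simp only [Set.mem_setOf_eq, Set.mem_singleton_iff]
          constructor
          · rintro ⟨h1, _⟩
            exact hv3 (by rw [h1, hmv])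
          · intro hj
            rw [hj]
            exact ⟨hmv, hv2 mv hmvk⟩
        rw [hsu, hsv, Cardinal.mk_singleton, Cardinal.mk_singleton]
    have hne : (g i ≠ u i) ↔ (g i ≠ v i) := not_congr (heq i)
    rw [hLHS, hRHS, hne]

end InfWordle

namespace InfWordle

variable {α : Type*} [Infinite α]

/-- The guess sequence of the strategy `G` against the adversary's
construction, defined by diagonal recursion: the `k`-th guess is what `G`
plays at stage `k` against the limit word of the machine fed with the first
`k` guesses (continued by a junk stream). -/
noncomputable def sguess (G : (ℕ → α) → ℕ → (ℕ → α)) (e : ℕ ≃ α) : ℕ → ℕ → α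
  | k => G (W e (fun j => if h : j < k then sguess G e j else fun _ => e 0)) k
  termination_by k => k
  decreasing_by exact h

/-- The stream consisting of the first `k` guesses, continued by junk. -/
noncomputable def extS (G : (ℕ → α) → ℕ → (ℕ → α)) (e : ℕ ≃ α) (k : ℕ) : ℕ → ℕ → α :=
  fun j => if h : j < k then sguess G e j else fun _ => e 0

/-- The full stream of guesses. -/
noncomputable def sigma (G : (ℕ → α) → ℕ → (ℕ → α)) (e : ℕ ≃ α) : ℕ → ℕ → α :=
  fun j => sguess G e j

lemma sguess_def (G : (ℕ → α) → ℕ → (ℕ → α)) (e : ℕ ≃ α) (k : ℕ) :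
    sguess G e k = G (W e (extS G e k)) k := by
  rw [sguess]
  rfl

lemma extS_prefix (G : (ℕ → α) → ℕ → (ℕ → α)) (e : ℕ ≃ α) {k n : ℕ} (hnk : n ≤ k) :
    ∀ j < n, extS G e k j = sigma G e j := by
  intro j hj
  show (if h : j < k then sguess G e j else fun _ => e 0) = sguess G e j
  exact dif_pos (lt_of_lt_of_le hj hnk)

lemma main_induction (G : (ℕ → α) → ℕ → (ℕ → α)) (e : ℕ ≃ α)
    (hG : ∀ w w' : ℕ → α, ∀ k : ℕ,
      (∀ j < k, greenSet (G w j) w = greenSet (G w' j) w' ∧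
          yellowSet (G w j) w = yellowSet (G w' j) w') →
        G w k = G w' k) :
    ∀ k : ℕ, G (W e (sigma G e)) k = sguess G e k ∧
      ∀ t, k < t → G (W e (extS G e t)) k = sguess G e k := by
  intro k
  induction k using Nat.strong_induction_on with
  | _ k IH =>
    have key : ∀ σ' : ℕ → ℕ → α, (∀ j < k, σ' j = sguess G e j) →
        (∀ j < k, G (W e σ') j = sguess G e j) →
        G (W e σ') k = sguess G e k := by
      intro σ' hpre hIHg
      have hkpre : ∀ j < k, extS G e k j = sigma G e j := extS_prefix G e le_rfl
      have hcond : ∀ j < k,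
          greenSet (G (W e σ') j) (W e σ') =
            greenSet (G (W e (extS G e k)) j) (W e (extS G e k)) ∧
          yellowSet (G (W e σ') j) (W e σ') =
            yellowSet (G (W e (extS G e k)) j) (W e (extS G e k)) := by
        intro j hj
        rw [hIHg j hj, (IH j hj).2 k hj]
        have h1 : mach e σ' (j + 1) = mach e (sigma G e) (j + 1) := by
          refine mach_prefix e σ' (sigma G e) (j + 1) ?_
          intro j' hj'
          exact hpre j' (lt_of_lt_of_le hj' (Nat.succ_le_of_lt hj))
        have h2 : mach e (extS G e k) (j + 1) = mach e (sigma G e) (j + 1) := by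
          refine mach_prefix e (extS G e k) (sigma G e) (j + 1) ?_
          intro j' hj'
          exact hkpre j' (lt_of_lt_of_le hj' (Nat.succ_le_of_lt hj))
        have hgL : sguess G e j ∈ (mach e (sigma G e) (j + 1)).1.2 := by
          rw [mach_L]
          exact List.mem_map.mpr ⟨j, List.mem_range.mpr (Nat.lt_succ_self j), rfl⟩
        refine FB (mach e (sigma G e) (j + 1)).1.1 ((mach e (sigma G e) (j + 1)).2.1)
          (sguess G e j) (W e σ') (W e (extS G e k)) ?_ ?_ (W_inj e σ') (W_surj e σ')
          ?_ ?_ (W_inj e (extS G e k)) (W_surj e (extS G e k))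
        · intro m a hma
          exact W_eq e σ' (by rw [h1]; exact hma)
        · intro m hm
          refine W_avoid e σ' (k := j + 1) (by rw [h1]; exact hm) (sguess G e j) ?_
          rw [h1]
          exact hgL
        · intro m a hma
          exact W_eq e (extS G e k) (by rw [h2]; exact hma)
        · intro m hm
          refine W_avoid e (extS G e k) (k := j + 1) (by rw [h2]; exact hm) (sguess G e j) ?_
          rw [h2]
          exact hgL
      have := hG (W e σ') (W e (extS G e k)) k hcond
      rw [this, ← sguess_def G e k]
    refine ⟨?_, ?_⟩
    · refine key (sigma G e) (fun j hj => rfl) (fun j hj => (IH j hj).1)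
    · intro t hkt
      refine key (extS G e t) ?_ ?_
      · intro j hj
        show (if h : j < t then sguess G e j else fun _ => e 0) = sguess G e j
        exact dif_pos (lt_trans hj hkt)
      · intro j hj
        exact (IH j hj).2 t (lt_trans hj hkt)

end InfWordle


/-- In infinite Wordle with the complete dictionary of all words `ℕ → α` over
a countably infinite alphabet `α`, no strategy of the codebreaker guarantees a
win at a finite stage: for every adaptive strategy (a guessing scheme whose
`k`-th guess depends only on the green/yellow feedback of earlier guesses)
there is a codeword that is never guessed at any finite stage. -/
theorem wordle_complete_dictionary_no_finite_win (α : Type*)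
    [Countable α] [Infinite α] :
    ∀ G : (ℕ → α) → ℕ → (ℕ → α),
      (∀ w w' : ℕ → α, ∀ k : ℕ,
        (∀ j < k, greenSet (G w j) w = greenSet (G w' j) w' ∧
            yellowSet (G w j) w = yellowSet (G w' j) w') →
          G w k = G w' k) →
      ∃ w : ℕ → α, ∀ k : ℕ, G w k ≠ w := by
  intro G hG
  obtain ⟨d⟩ := nonempty_denumerable α
  letI := d
  let e : ℕ ≃ α := (Denumerable.eqv α).symm
  refine ⟨InfWordle.W e (InfWordle.sigma G e), ?_⟩
  intro k hk
  have h1 := (InfWordle.main_induction G e hG k).1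
  rw [h1] at hk
  obtain ⟨m, hm⟩ :=
    (InfWordle.keys_finite
      (InfWordle.mach e (InfWordle.sigma G e) (k + 1)).1.1).infinite_compl.nonempty
  have hgL : InfWordle.sguess G e k ∈ (InfWordle.mach e (InfWordle.sigma G e) (k + 1)).1.2 := by
    rw [InfWordle.mach_L]
    exact List.mem_map.mpr ⟨k, List.mem_range.mpr (Nat.lt_succ_self k), rfl⟩
  exact InfWordle.W_avoid e (InfWordle.sigma G e) hm (InfWordle.sguess G e k) hgL
    (congrFun hk m)
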